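/- The Hausdorff dimension of S equals log 3 / log(1/ρ). -/

import Mathlib

open Metric Set Bornology

/-- The vertices of the unit equilateral triangle. -/
noncomputable def v0 : EuclideanSpace ℝ (Fin 2) :=
  (WithLp.equiv 2 (Fin 2 → ℝ)).symm ![0, 0]

noncomputable def v1 : EuclideanSpace ℝ (Fin 2) :=
  (WithLp.equiv 2 (Fin 2 → ℝ)).symm ![1, 0]

noncomputable def v2 : EuclideanSpace ℝ (Fin 2) :=
  (WithLp.equiv 2 (Fin 2 → ℝ)).symm ![1 / 2, Real.sqrt 3 / 2]

/-- The homothety with center `v0` (resp. `v1`, `v2`) and ratio `ρ`. -/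
noncomputable def f0 (ρ : ℝ) (x : EuclideanSpace ℝ (Fin 2)) : EuclideanSpace ℝ (Fin 2) :=
  v0 + ρ • (x - v0)

noncomputable def f1 (ρ : ℝ) (x : EuclideanSpace ℝ (Fin 2)) : EuclideanSpace ℝ (Fin 2) :=
  v1 + ρ • (x - v1)

noncomputable def f2 (ρ : ℝ) (x : EuclideanSpace ℝ (Fin 2)) : EuclideanSpace ℝ (Fin 2) :=
  v2 + ρ • (x - v2)

/-- The union of the images of a set under the three homotheties. -/
noncomputable def sierpPhi (ρ : ℝ) (X : Set (EuclideanSpace ℝ (Fin 2))) :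
    Set (EuclideanSpace ℝ (Fin 2)) :=
  f0 ρ '' X ∪ f1 ρ '' X ∪ f2 ρ '' X

/-- The filled equilateral triangle. -/
noncomputable def sierpT : Set (EuclideanSpace ℝ (Fin 2)) :=
  convexHull ℝ {v0, v1, v2}

/-- The generalized Sierpinski triangle with contraction ratio `ρ`. -/
noncomputable def sierpinski (ρ : ℝ) : Set (EuclideanSpace ℝ (Fin 2)) :=
  ⋂ k : ℕ, (sierpPhi ρ)^[k] sierpT

namespace Sierp
open MeasureTheory
open scoped Classical ENNReal NNReal

abbrev E := EuclideanSpace ℝ (Fin 2)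

noncomputable def bc (i : Fin 3) (x : E) : ℝ :=
  if i = 0 then 1 - x 0 - x 1 / Real.sqrt 3
  else if i = 1 then x 0 - x 1 / Real.sqrt 3
  else 2 * x 1 / Real.sqrt 3

lemma s3_pos : (0:ℝ) < Real.sqrt 3 := Real.sqrt_pos.2 (by norm_num)

noncomputable def vtx (i : Fin 3) : E :=
  if i = 0 then v0 else if i = 1 then v1 else v2

lemma bc_vtx (i j : Fin 3) : bc i (vtx j) = if i = j then 1 else 0 := by
  have h3 : Real.sqrt 3 ≠ 0 := s3_pos.ne'
  fin_cases i <;> fin_cases j <;> simp [bc, vtx, v0, v1, v2] <;> field_simp <;> ring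

noncomputable def fh (ρ : ℝ) (i : Fin 3) (x : E) : E := vtx i + ρ • (x - vtx i)

lemma sierpPhi_eq (ρ : ℝ) (X : Set E) : sierpPhi ρ X = ⋃ i : Fin 3, fh ρ i '' X := by
  ext x
  simp only [sierpPhi, mem_union, mem_iUnion]
  constructor
  · rintro ((h | h) | h)
    exacts [⟨0, h⟩, ⟨1, h⟩, ⟨2, h⟩]
  · rintro ⟨i, h⟩
    fin_cases i
    exacts [Or.inl (Or.inl h), Or.inl (Or.inr h), Or.inr h]

lemma fh_sub (ρ : ℝ) (i : Fin 3) (x y : E) : fh ρ i x - fh ρ i y = ρ • (x - y) := by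
  simp only [fh]; module

lemma dist_fh (ρ : ℝ) (hρ0 : 0 ≤ ρ) (i : Fin 3) (x y : E) :
    dist (fh ρ i x) (fh ρ i y) = ρ * dist x y := by
  rw [dist_eq_norm, dist_eq_norm, fh_sub, norm_smul, Real.norm_eq_abs, abs_of_nonneg hρ0]

lemma fh_inj {ρ : ℝ} (hρ0 : 0 < ρ) (i : Fin 3) : Function.Injective (fh ρ i) := by
  intro x y h
  have h2 := dist_fh ρ hρ0.le i x y
  rw [h, dist_self] at h2
  have : dist x y = 0 := by
    rcases mul_eq_zero.1 h2.symm with h | h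
    · exact absurd h hρ0.ne'
    · exact h
  exact dist_eq_zero.1 this

lemma fh_surj {ρ : ℝ} (hρ0 : 0 < ρ) (i : Fin 3) : Function.Surjective (fh ρ i) := by
  intro y
  refine ⟨vtx i + ρ⁻¹ • (y - vtx i), ?_⟩
  simp only [fh]
  rw [add_sub_cancel_left, smul_smul, mul_inv_cancel₀ hρ0.ne', one_smul, add_sub_cancel]

lemma fh_eq_comb (ρ : ℝ) (i : Fin 3) (x : E) : fh ρ i x = (1 - ρ) • vtx i + ρ • x := by
  simp only [fh]; module

lemma bc_affine (i : Fin 3) (v : E) (r : ℝ) (x : E) :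
    bc i (v + r • (x - v)) = r * bc i x + (1 - r) * bc i v := by
  have h0 : ∀ (a b : E) (j : Fin 2), (a + b) j = a j + b j := fun a b j => rfl
  have h1 : ∀ (c : ℝ) (a : E) (j : Fin 2), (c • a) j = c * a j := fun c a j => rfl
  have h2 : ∀ (a b : E) (j : Fin 2), (a - b) j = a j - b j := fun a b j => rfl
  fin_cases i <;> · simp [bc, h0, h1, h2]; ring

lemma bc_fh (ρ : ℝ) (i j : Fin 3) (x : E) :
    bc i (fh ρ j x) = ρ * bc i x + (1 - ρ) * (if i = j then 1 else 0) := by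
  rw [fh, bc_affine, bc_vtx]

lemma bc_sum (x : E) : bc 0 x + bc 1 x + bc 2 x = 1 := by
  have h3 : Real.sqrt 3 ≠ 0 := s3_pos.ne'
  simp [bc]
  ring

lemma coord_abs_le_norm (x : E) (j : Fin 2) : |x j| ≤ ‖x‖ := by
  rw [EuclideanSpace.norm_eq, ← Real.sqrt_sq_eq_abs]
  apply Real.sqrt_le_sqrt
  have := Finset.single_le_sum (f := fun i => ‖x i‖^2) (fun i _ => sq_nonneg _)
    (Finset.mem_univ j)
  simpa [Real.norm_eq_abs, sq_abs] using this

lemma bc_lip (i : Fin 3) (x y : E) : |bc i x - bc i y| ≤ 2 * dist x y := by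
  have h3 : (1:ℝ) ≤ Real.sqrt 3 := by
    rw [show (1:ℝ) = Real.sqrt 1 by simp]
    exact Real.sqrt_le_sqrt (by norm_num)
  have hd : dist x y = ‖x - y‖ := dist_eq_norm x y
  have hc0 : |x 0 - y 0| ≤ ‖x - y‖ := coord_abs_le_norm (x - y) 0
  have hc1 : |x 1 - y 1| ≤ ‖x - y‖ := coord_abs_le_norm (x - y) 1
  have hq : |x 1 / Real.sqrt 3 - y 1 / Real.sqrt 3| ≤ ‖x - y‖ := by
    rw [div_sub_div_same, abs_div, abs_of_pos s3_pos]
    exact le_trans (div_le_self (abs_nonneg _) h3) hc1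
  have hn : (0:ℝ) ≤ ‖x - y‖ := norm_nonneg _
  fin_cases i
  · show |1 - x 0 - x 1 / Real.sqrt 3 - (1 - y 0 - y 1 / Real.sqrt 3)| ≤ 2 * dist x y
    rw [hd]
    calc |1 - x 0 - x 1 / Real.sqrt 3 - (1 - y 0 - y 1 / Real.sqrt 3)|
        = |-(x 0 - y 0) + -(x 1 / Real.sqrt 3 - y 1 / Real.sqrt 3)| := by ring_nf
      _ ≤ |-(x 0 - y 0)| + |-(x 1 / Real.sqrt 3 - y 1 / Real.sqrt 3)| := abs_add_le _ _
      _ ≤ ‖x - y‖ + ‖x - y‖ := by rw [abs_neg, abs_neg]; exact add_le_add hc0 hq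
      _ = 2 * ‖x - y‖ := by ring
  · show |x 0 - x 1 / Real.sqrt 3 - (y 0 - y 1 / Real.sqrt 3)| ≤ 2 * dist x y
    rw [hd]
    calc |x 0 - x 1 / Real.sqrt 3 - (y 0 - y 1 / Real.sqrt 3)|
        = |(x 0 - y 0) + -(x 1 / Real.sqrt 3 - y 1 / Real.sqrt 3)| := by ring_nf
      _ ≤ |x 0 - y 0| + |-(x 1 / Real.sqrt 3 - y 1 / Real.sqrt 3)| := abs_add_le _ _
      _ ≤ ‖x - y‖ + ‖x - y‖ := by rw [abs_neg]; exact add_le_add hc0 hq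
      _ = 2 * ‖x - y‖ := by ring
  · show |2 * x 1 / Real.sqrt 3 - 2 * y 1 / Real.sqrt 3| ≤ 2 * dist x y
    rw [hd]
    have he : 2 * x 1 / Real.sqrt 3 - 2 * y 1 / Real.sqrt 3
        = 2 * (x 1 / Real.sqrt 3 - y 1 / Real.sqrt 3) := by ring
    rw [he, abs_mul, abs_two]
    linarith

/-! ### The open region and separation -/

def O : Set E := {x | ∀ i, 0 < bc i x}

lemma bc_lt_one {x : E} (hx : x ∈ O) (i : Fin 3) : bc i x < 1 := by
  have h := bc_sum x
  have h0 := hx 0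
  have h1 := hx 1
  have h2 := hx 2
  fin_cases i <;> simp_all <;> linarith

lemma fh_mem_O {ρ : ℝ} (hρ0 : 0 < ρ) (hρ1 : ρ < 1) {x : E} (hx : x ∈ O) (i : Fin 3) :
    fh ρ i x ∈ O := by
  intro j
  rw [bc_fh]
  by_cases h : j = i
  · rw [if_pos h]
    have := hx j
    nlinarith
  · rw [if_neg h]
    have := hx j
    nlinarith

lemma bc_fh_gt {ρ : ℝ} (hρ0 : 0 < ρ) (hρ : ρ ≤ 1/2) {x : E} (hx : x ∈ O) (i : Fin 3) :
    1/2 < bc i (fh ρ i x) := by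
  rw [bc_fh, if_pos rfl]
  have := hx i
  nlinarith

lemma bc_fh_lt {ρ : ℝ} (hρ0 : 0 < ρ) (hρ : ρ ≤ 1/2) {x : E} (hx : x ∈ O) {i j : Fin 3}
    (hij : i ≠ j) : bc i (fh ρ j x) < 1/2 := by
  rw [bc_fh, if_neg hij]
  have h1 := bc_lt_one hx i
  have h2 := hx i
  nlinarith

lemma fhO_disj {ρ : ℝ} (hρ0 : 0 < ρ) (hρ : ρ ≤ 1/2) {i j : Fin 3} (hij : i ≠ j) :
    Disjoint (fh ρ i '' O) (fh ρ j '' O) := by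
  rw [Set.disjoint_left]
  rintro a ⟨x, hx, rfl⟩ ⟨y, hy, hexy⟩
  have h1 : 1/2 < bc i (fh ρ i x) := bc_fh_gt hρ0 hρ hx i
  have h2 : bc i (fh ρ j y) < 1/2 := bc_fh_lt hρ0 hρ hy hij
  rw [hexy] at h2
  linarith

/-! ### Words -/

noncomputable def gl (ρ : ℝ) : List (Fin 3) → E → E
  | [] => id
  | i :: w => fh ρ i ∘ gl ρ w

@[simp] lemma gl_nil (ρ : ℝ) : gl ρ [] = id := rfl

@[simp] lemma gl_cons (ρ : ℝ) (i : Fin 3) (w : List (Fin 3)) :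
    gl ρ (i :: w) = fh ρ i ∘ gl ρ w := rfl

lemma gl_append (ρ : ℝ) (u w : List (Fin 3)) : gl ρ (u ++ w) = gl ρ u ∘ gl ρ w := by
  induction u with
  | nil => rfl
  | cons i s ih => simp [ih]; rfl

lemma dist_gl {ρ : ℝ} (hρ0 : 0 ≤ ρ) (w : List (Fin 3)) (x y : E) :
    dist (gl ρ w x) (gl ρ w y) = ρ ^ w.length * dist x y := by
  induction w with
  | nil => simp
  | cons i s ih =>
    simp only [gl_cons, Function.comp_apply, List.length_cons]
    rw [dist_fh ρ hρ0, ih, pow_succ]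
    ring

lemma gl_inj {ρ : ℝ} (hρ0 : 0 < ρ) (w : List (Fin 3)) : Function.Injective (gl ρ w) := by
  induction w with
  | nil => exact fun x y h => h
  | cons i s ih => exact (fh_inj hρ0 i).comp ih

lemma gl_surj {ρ : ℝ} (hρ0 : 0 < ρ) (w : List (Fin 3)) : Function.Surjective (gl ρ w) := by
  induction w with
  | nil => exact fun x => ⟨x, rfl⟩
  | cons i s ih => exact (fh_surj hρ0 i).comp ih

lemma gl_mem_O {ρ : ℝ} (hρ0 : 0 < ρ) (hρ1 : ρ < 1) (w : List (Fin 3)) {x : E} (hx : x ∈ O) :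
    gl ρ w x ∈ O := by
  induction w with
  | nil => exact hx
  | cons i s ih => exact fh_mem_O hρ0 hρ1 ih i

lemma glO_disj {ρ : ℝ} (hρ0 : 0 < ρ) (hρ : ρ ≤ 1/2) :
    ∀ w w' : List (Fin 3), w.length = w'.length → w ≠ w' →
      Disjoint (gl ρ w '' O) (gl ρ w' '' O) := by
  have hρ1 : ρ < 1 := lt_of_le_of_lt hρ (by norm_num)
  intro w
  induction w with
  | nil =>
    intro w' hlen hne
    cases w' with
    | nil => exact absurd rfl hne
    | cons i' s' => simp at hlen
  | cons i s ih =>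
    intro w' hlen hne
    cases w' with
    | nil => simp at hlen
    | cons i' s' =>
      by_cases hii : i = i'
      · subst hii
        have hss : s ≠ s' := fun h => hne (by rw [h])
        have hlen' : s.length = s'.length := by simpa using hlen
        have hdisj := ih s' hlen' hss
        simp only [gl_cons, Set.image_comp]
        exact Set.disjoint_image_of_injective (fh_inj hρ0 i) hdisj
      · have h1 : gl ρ (i :: s) '' O ⊆ fh ρ i '' O := by
          rw [gl_cons, Set.image_comp]
          exact Set.image_mono (Set.image_subset_iff.2 fun x hx => gl_mem_O hρ0 hρ1 s hx)
        have h2 : gl ρ (i' :: s') '' O ⊆ fh ρ i' '' O := by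
          rw [gl_cons, Set.image_comp]
          exact Set.image_mono (Set.image_subset_iff.2 fun x hx => gl_mem_O hρ0 hρ1 s' hx)
        exact Set.disjoint_of_subset h1 h2 (fhO_disj hρ0 hρ hii)

/-! ### The finset of words of length n -/

noncomputable def Ln : ℕ → Finset (List (Fin 3))
  | 0 => {[]}
  | n+1 => Finset.univ.biUnion (fun i : Fin 3 => (Ln n).image (List.cons i))

lemma mem_Ln {w : List (Fin 3)} {n : ℕ} : w ∈ Ln n ↔ w.length = n := by
  induction n generalizing w with
  | zero => simp [Ln, List.length_eq_zero_iff]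
  | succ n ih =>
    cases w with
    | nil => simp [Ln]
    | cons i s =>
      simp only [Ln, Finset.mem_biUnion, Finset.mem_univ, Finset.mem_image, true_and,
        List.length_cons, Nat.succ_eq_add_one, add_left_inj]
      constructor
      · rintro ⟨j, a, ha, heq⟩
        obtain ⟨rfl, rfl⟩ : j = i ∧ a = s := by
          constructor <;> · injection heq <;> simp_all
        exact ih.1 ha
      · intro h
        exact ⟨i, s, ih.2 h, rfl⟩

lemma card_Ln (n : ℕ) : (Ln n).card = 3 ^ n := by
  induction n with
  | zero => simp [Ln]
  | succ n ih =>
    rw [Ln, Finset.card_biUnion]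
    · simp only [Finset.card_image_of_injective _ (List.cons_injective), ih]
      simp [pow_succ, mul_comm]
    · intro i _ j _ hij
      rw [Function.onFun, Finset.disjoint_left]
      intro a ha hb
      simp only [Finset.mem_image] at ha hb
      obtain ⟨b, _, rfl⟩ := ha
      obtain ⟨c, _, heq⟩ := hb
      injection heq with h1 _
      exact hij h1.symm

/-! ### The triangle -/

lemma vtx_mem_T (i : Fin 3) : vtx i ∈ sierpT := by
  apply subset_convexHull
  fin_cases i <;> simp [vtx]

lemma convex_T : Convex ℝ sierpT := convex_convexHull ℝ _

lemma fh_mem_T {ρ : ℝ} (hρ0 : 0 ≤ ρ) (hρ1 : ρ ≤ 1) (i : Fin 3) {x : E} (hx : x ∈ sierpT) :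
    fh ρ i x ∈ sierpT := by
  rw [fh_eq_comb]
  exact convex_T (vtx_mem_T i) hx (by linarith) hρ0 (by ring)

lemma T_compact : IsCompact sierpT := by
  exact Set.Finite.isCompact_convexHull ℝ (Set.toFinite _)

lemma T_subset_ball : sierpT ⊆ closedBall v0 1 := by
  apply convexHull_min _ (convex_closedBall v0 1)
  have h2 : dist v1 v0 ≤ 1 := by
    rw [EuclideanSpace.dist_eq]
    have : ∀ i : Fin 2, (v1 i - v0 i) = ![(1:ℝ), 0] i := by
      intro i; fin_cases i <;> simp [v1, v0]
    rw [show (∑ i, dist (v1 i) (v0 i) ^ 2) = ∑ i : Fin 2, (![(1:ℝ),0] i)^2 by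
      refine Finset.sum_congr rfl fun i _ => ?_
      rw [Real.dist_eq, ← this i, sq_abs]]
    norm_num [Fin.sum_univ_two]
  have h3 : dist v2 v0 ≤ 1 := by
    rw [EuclideanSpace.dist_eq]
    have : ∀ i : Fin 2, (v2 i - v0 i) = ![(1/2:ℝ), Real.sqrt 3/2] i := by
      intro i; fin_cases i <;> simp [v2, v0]
    rw [show (∑ i, dist (v2 i) (v0 i) ^ 2) = ∑ i : Fin 2, (![(1/2:ℝ),Real.sqrt 3/2] i)^2 by
      refine Finset.sum_congr rfl fun i _ => ?_
      rw [Real.dist_eq, ← this i, sq_abs]]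
    rw [Fin.sum_univ_two]
    have hs : Real.sqrt 3 ^ 2 = 3 := Real.sq_sqrt (by norm_num)
    simp only [Matrix.cons_val_zero, Matrix.cons_val_one, Matrix.head_cons]
    rw [div_pow, div_pow, hs]
    norm_num
  rintro x (rfl | rfl | rfl)
  · simp
  · simpa [mem_closedBall] using h2
  · simpa [mem_closedBall] using h3

lemma dist_le_two_T {p q : E} (hp : p ∈ sierpT) (hq : q ∈ sierpT) : dist p q ≤ 2 := by
  have h1 := T_subset_ball hp
  have h2 := T_subset_ball hq
  rw [mem_closedBall] at h1 h2
  calc dist p q ≤ dist p v0 + dist v0 q := dist_triangle _ _ _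
    _ ≤ 1 + 1 := add_le_add h1 (by rwa [dist_comm])
    _ = 2 := by norm_num

/-! ### Iterates -/

lemma phi_mono {ρ : ℝ} {X Y : Set E} (h : X ⊆ Y) : sierpPhi ρ X ⊆ sierpPhi ρ Y := by
  rw [sierpPhi_eq, sierpPhi_eq]
  exact Set.iUnion_mono fun i => Set.image_mono h

lemma phi_iter_mono {ρ : ℝ} (k : ℕ) {X Y : Set E} (h : X ⊆ Y) :
    (sierpPhi ρ)^[k] X ⊆ (sierpPhi ρ)^[k] Y := by
  induction k generalizing X Y with
  | zero => exact h
  | succ k ih => rw [Function.iterate_succ_apply, Function.iterate_succ_apply]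
                 exact ih (phi_mono h)

lemma phi_T_sub {ρ : ℝ} (hρ0 : 0 ≤ ρ) (hρ1 : ρ ≤ 1) : sierpPhi ρ sierpT ⊆ sierpT := by
  rw [sierpPhi_eq]
  exact Set.iUnion_subset fun i => Set.image_subset_iff.2 fun x hx => fh_mem_T hρ0 hρ1 i hx

lemma S_sub_iter (ρ : ℝ) (k : ℕ) : sierpinski ρ ⊆ (sierpPhi ρ)^[k] sierpT :=
  Set.iInter_subset _ k

lemma S_sub_T (ρ : ℝ) : sierpinski ρ ⊆ sierpT := S_sub_iter ρ 0

lemma fh_fix (ρ : ℝ) (i : Fin 3) : fh ρ i (vtx i) = vtx i := by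
  simp [fh]

lemma v0_mem_S (ρ : ℝ) : v0 ∈ sierpinski ρ := by
  apply Set.mem_iInter.2
  intro k
  induction k with
  | zero => exact vtx_mem_T 0
  | succ k ih =>
    rw [Function.iterate_succ_apply', sierpPhi_eq]
    refine Set.mem_iUnion.2 ⟨0, ⟨v0, ih, ?_⟩⟩
    show fh ρ 0 v0 = v0
    have : v0 = vtx 0 := rfl
    rw [this, fh_fix]

lemma S_nonempty (ρ : ℝ) : (sierpinski ρ).Nonempty := ⟨v0, v0_mem_S ρ⟩

lemma phi_S_sub {ρ : ℝ} (hρ0 : 0 ≤ ρ) (hρ1 : ρ ≤ 1) :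
    sierpPhi ρ (sierpinski ρ) ⊆ sierpinski ρ := by
  apply Set.subset_iInter
  intro k
  cases k with
  | zero => exact (phi_mono (S_sub_T ρ)).trans (phi_T_sub hρ0 hρ1)
  | succ k =>
    rw [Function.iterate_succ_apply']
    exact phi_mono (S_sub_iter ρ k)

lemma fh_mem_S {ρ : ℝ} (hρ0 : 0 ≤ ρ) (hρ1 : ρ ≤ 1) (i : Fin 3) {x : E}
    (hx : x ∈ sierpinski ρ) : fh ρ i x ∈ sierpinski ρ := by
  apply phi_S_sub hρ0 hρ1
  rw [sierpPhi_eq]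
  exact Set.mem_iUnion.2 ⟨i, ⟨x, hx, rfl⟩⟩

lemma gl_mem_S {ρ : ℝ} (hρ0 : 0 ≤ ρ) (hρ1 : ρ ≤ 1) (w : List (Fin 3)) {x : E}
    (hx : x ∈ sierpinski ρ) : gl ρ w x ∈ sierpinski ρ := by
  induction w with
  | nil => exact hx
  | cons i s ih => exact fh_mem_S hρ0 hρ1 i ih

lemma gl_mem_T {ρ : ℝ} (hρ0 : 0 ≤ ρ) (hρ1 : ρ ≤ 1) (w : List (Fin 3)) {x : E}
    (hx : x ∈ sierpT) : gl ρ w x ∈ sierpT := by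
  induction w with
  | nil => exact hx
  | cons i s ih => exact fh_mem_T hρ0 hρ1 i ih

lemma iter_eq_union (ρ : ℝ) (n : ℕ) (X : Set E) :
    (sierpPhi ρ)^[n] X = ⋃ w ∈ Ln n, gl ρ w '' X := by
  induction n with
  | zero => simp [Ln]
  | succ n ih =>
    rw [Function.iterate_succ_apply', ih, sierpPhi_eq]
    ext x
    simp only [Set.mem_iUnion, Set.mem_image, Ln, Finset.mem_biUnion, Finset.mem_univ,
      Finset.mem_image, true_and]
    constructor
    · rintro ⟨i, y, hy, rfl⟩
      try simp only [Set.mem_iUnion, Set.mem_image] at hy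
      obtain ⟨w, hw, z, hz, rfl⟩ := hy
      exact ⟨i :: w, ⟨i, w, hw, rfl⟩, z, hz, rfl⟩
    · rintro ⟨w', ⟨i, w, hw, rfl⟩, z, hz, rfl⟩
      refine ⟨i, gl ρ w z, ?_, rfl⟩
      try simp only [Set.mem_iUnion, Set.mem_image]
      exact ⟨w, hw, z, hz, rfl⟩

lemma phi_compact {ρ : ℝ} {X : Set E} (hX : IsCompact X) : IsCompact (sierpPhi ρ X) := by
  rw [sierpPhi_eq]
  apply isCompact_iUnion
  intro i
  apply hX.image
  show Continuous (fun x => vtx i + ρ • (x - vtx i))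
  exact continuous_const.add ((continuous_id.sub continuous_const).const_smul ρ)

lemma S_closed (ρ : ℝ) : IsClosed (sierpinski ρ) := by
  apply isClosed_iInter
  intro k
  induction k with
  | zero => exact T_compact.isClosed
  | succ k ih =>
    rw [Function.iterate_succ_apply']
    exact (phi_compact (by
      clear ih
      induction k with
      | zero => exact T_compact
      | succ k ih => rw [Function.iterate_succ_apply']; exact phi_compact ih)).isClosed

lemma S_compact (ρ : ℝ) : IsCompact (sierpinski ρ) :=
  T_compact.of_isClosed_subset (S_closed ρ) (S_sub_T ρ)

/-! ### The center -/

noncomputable def ctr : E := (WithLp.equiv 2 (Fin 2 → ℝ)).symm ![1/2, Real.sqrt 3/6]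

lemma bc_ctr (i : Fin 3) : bc i ctr = 1/3 := by
  have h3 : Real.sqrt 3 ≠ 0 := s3_pos.ne'
  have hs : Real.sqrt 3 * Real.sqrt 3 = 3 := Real.mul_self_sqrt (by norm_num)
  fin_cases i <;> simp [bc, ctr] <;> field_simp <;> nlinarith [hs]

lemma ball_ctr_sub_O : ball ctr (1/12) ⊆ O := by
  intro x hx
  rw [mem_ball] at hx
  intro i
  have hl := bc_lip i x ctr
  have hc := bc_ctr i
  have : |bc i x - 1/3| ≤ 2 * dist x ctr := by rwa [hc] at hl
  have h2 : |bc i x - 1/3| < 1/6 := lt_of_le_of_lt this (by linarith)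
  have := abs_lt.1 h2
  linarith [this.1]

lemma ctr_mem_T : ctr ∈ sierpT := by
  have hv1 : v1 ∈ sierpT := vtx_mem_T 1
  have hv2 : v2 ∈ sierpT := vtx_mem_T 2
  have hv0 : v0 ∈ sierpT := vtx_mem_T 0
  have hm : (1/2 : ℝ) • v1 + (1/2 : ℝ) • v2 ∈ sierpT :=
    convex_T hv1 hv2 (by norm_num) (by norm_num) (by norm_num)
  have hc : (1/3 : ℝ) • v0 + (2/3 : ℝ) • ((1/2 : ℝ) • v1 + (1/2 : ℝ) • v2) ∈ sierpT :=
    convex_T hv0 hm (by norm_num) (by norm_num) (by norm_num)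
  have he : ctr = (1/3 : ℝ) • v0 + (2/3 : ℝ) • ((1/2 : ℝ) • v1 + (1/2 : ℝ) • v2) := by
    have : ∀ j : Fin 2, ctr j
        = ((1/3 : ℝ) • v0 + (2/3 : ℝ) • ((1/2 : ℝ) • v1 + (1/2 : ℝ) • v2)) j := by
      intro j
      have h0 : ∀ (a b : E) (j : Fin 2), (a + b) j = a j + b j := fun a b j => rfl
      have h1 : ∀ (c : ℝ) (a : E) (j : Fin 2), (c • a) j = c * a j := fun c a j => rfl
      fin_cases j <;> simp [h0, h1, ctr, v0, v1, v2] <;> ring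
    exact PiLp.ext this
  rw [he]
  exact hc

/-! ### The dimension exponent -/

noncomputable def dd (ρ : ℝ) : ℝ := Real.log 3 / Real.log (1/ρ)

lemma log_inv_pos {ρ : ℝ} (hρ0 : 0 < ρ) (hρ : ρ ≤ 1/2) : 0 < Real.log (1/ρ) := by
  apply Real.log_pos
  rw [lt_div_iff₀ hρ0]
  linarith

lemma dd_pos {ρ : ℝ} (hρ0 : 0 < ρ) (hρ : ρ ≤ 1/2) : 0 < dd ρ :=
  div_pos (Real.log_pos (by norm_num)) (log_inv_pos hρ0 hρ)

lemma dd_le_two {ρ : ℝ} (hρ0 : 0 < ρ) (hρ : ρ ≤ 1/2) : dd ρ ≤ 2 := by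
  have h2 : Real.log 2 ≤ Real.log (1/ρ) := by
    apply Real.log_le_log (by norm_num)
    rw [le_div_iff₀ hρ0]
    linarith
  have h2p : (0:ℝ) < Real.log 2 := Real.log_pos (by norm_num)
  have h3 : Real.log 3 ≤ 2 * Real.log 2 := by
    have : Real.log 3 ≤ Real.log 4 := Real.log_le_log (by norm_num) (by norm_num)
    have h4 : Real.log 4 = 2 * Real.log 2 := by
      rw [show (4:ℝ) = 2^2 by norm_num, Real.log_pow]
      push_cast; ring
    linarith
  rw [dd, div_le_iff₀ (log_inv_pos hρ0 hρ)]
  nlinarith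

lemma log_rho_neg {ρ : ℝ} (hρ0 : 0 < ρ) (hρ : ρ ≤ 1/2) : Real.log ρ < 0 :=
  Real.log_neg hρ0 (by linarith)

lemma rpow_dd {ρ : ℝ} (hρ0 : 0 < ρ) (hρ : ρ ≤ 1/2) : ρ ^ (dd ρ) = 1/3 := by
  have hlog : Real.log (1/ρ) = -Real.log ρ := by
    rw [one_div, Real.log_inv]
  have hlρ : Real.log ρ ≠ 0 := (log_rho_neg hρ0 hρ).ne
  rw [Real.rpow_def_of_pos hρ0, dd, hlog]
  have h : Real.log ρ * (Real.log 3 / -Real.log ρ) = -Real.log 3 := by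
    rw [div_neg, mul_neg, mul_div_assoc', mul_comm, mul_div_assoc, div_self hlρ, mul_one]
  rw [h, Real.exp_neg, Real.exp_log (by norm_num : (0:ℝ) < 3)]
  norm_num

lemma rpow_pow_dd {ρ : ℝ} (hρ0 : 0 < ρ) (hρ : ρ ≤ 1/2) (k : ℕ) :
    ((ρ ^ k : ℝ)) ^ (dd ρ) = (1/3 : ℝ)^k := by
  rw [← Real.rpow_natCast ρ k, ← Real.rpow_mul hρ0.le, mul_comm,
    Real.rpow_mul hρ0.le, rpow_dd hρ0 hρ, Real.rpow_natCast]

/-! ### Counting fibers -/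

lemma card_filter_take (q : List (Fin 3)) {k m : ℕ} (hk : k ≤ m) :
    ((Ln m).filter (fun w => w.take k = q)).card ≤ 3 ^ (m - k) := by
  have : ((Ln m).filter (fun w => w.take k = q)).card ≤ (Ln (m - k)).card := by
    apply Finset.card_le_card_of_injOn (fun w => w.drop k)
    · intro w hw
      simp only [Finset.mem_coe] at hw ⊢
      rw [Finset.mem_filter] at hw
      rw [mem_Ln] at hw ⊢
      rw [List.length_drop, hw.1]
    · intro w1 h1 w2 h2 hd
      rw [Finset.mem_coe, Finset.mem_filter] at h1 h2
      have e1 := List.take_append_drop k w1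
      have e2 := List.take_append_drop k w2
      rw [h1.2] at e1
      rw [h2.2] at e2
      simp only at hd
      rw [← e1, ← e2, hd]
  rw [card_Ln] at this
  exact this

/-! ### Packing estimate -/

lemma packing {ρ : ℝ} (hρ0 : 0 < ρ) (hρ : ρ ≤ 1/2) (p : E) (Δ : ℝ) (hΔ : 0 < Δ) (k : ℕ) :
    (((Ln k).filter
        (fun w => (gl ρ w '' sierpT ∩ ball p Δ).Nonempty)).card : ℝ) * (ρ^k/12)^2
      ≤ (Δ + 3*ρ^k)^2 := by
  classical
  have hρ1 : ρ < 1 := lt_of_le_of_lt hρ (by norm_num)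
  have hρk : (0:ℝ) < ρ^k := pow_pos hρ0 k
  set W := (Ln k).filter (fun w => (gl ρ w '' sierpT ∩ ball p Δ).Nonempty) with hW
  set r : ℝ := ρ^k/12 with hr
  have hrpos : 0 < r := by positivity
  set R : ℝ := Δ + 3*ρ^k with hR
  have hRpos : 0 < R := by positivity
  -- the small balls
  have hsub_O : ∀ w ∈ W, ball (gl ρ w ctr) r ⊆ gl ρ w '' O := by
    intro w hw y hy
    obtain ⟨x, rfl⟩ := gl_surj hρ0 w y
    rw [mem_ball] at hy
    have hlen : w.length = k := mem_Ln.1 (Finset.mem_filter.1 hw).1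
    rw [dist_gl hρ0.le, hlen] at hy
    have : dist x ctr < 1/12 := by
      by_contra hcon
      push_neg at hcon
      have : ρ ^ k * (1/12) ≤ ρ^k * dist x ctr := by
        apply mul_le_mul_of_nonneg_left hcon hρk.le
      rw [hr] at hy
      nlinarith
    exact ⟨x, ball_ctr_sub_O (mem_ball.2 this), rfl⟩
  have hdisj : (W : Set (List (Fin 3))).Pairwise
      (fun w w' => Disjoint (ball (gl ρ w ctr) r) (ball (gl ρ w' ctr) r)) := by
    intro w hw w' hw' hne
    rw [Finset.mem_coe] at hw hw'
    have hlw : w.length = k := mem_Ln.1 (Finset.mem_filter.1 hw).1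
    have hlw' : w'.length = k := mem_Ln.1 (Finset.mem_filter.1 hw').1
    exact Set.disjoint_of_subset (hsub_O w hw) (hsub_O w' hw')
      (glO_disj hρ0 hρ w w' (by rw [hlw, hlw']) hne)
  have hsub_big : ∀ w ∈ W, ball (gl ρ w ctr) r ⊆ closedBall p R := by
    intro w hw y hy
    obtain ⟨hwL, q, hq1, hq2⟩ :
        w ∈ Ln k ∧ ∃ q, q ∈ gl ρ w '' sierpT ∧ q ∈ ball p Δ := by
      have := Finset.mem_filter.1 hw
      obtain ⟨q, hq⟩ := this.2
      exact ⟨this.1, q, hq.1, hq.2⟩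
    obtain ⟨t, ht, rfl⟩ := hq1
    have hlen : w.length = k := mem_Ln.1 hwL
    rw [mem_ball] at hy hq2
    rw [mem_closedBall]
    have hctr : dist (gl ρ w ctr) (gl ρ w t) ≤ 2 * ρ^k := by
      rw [dist_gl hρ0.le, hlen]
      have := dist_le_two_T ctr_mem_T ht
      nlinarith
    calc dist y p ≤ dist y (gl ρ w ctr) + dist (gl ρ w ctr) (gl ρ w t)
          + dist (gl ρ w t) p := dist_triangle4 _ _ _ _
      _ ≤ r + 2 * ρ^k + Δ := by
          apply add_le_add (add_le_add hy.le hctr) hq2.le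
      _ ≤ R := by rw [hr, hR]; nlinarith
  -- volume comparison
  have hfr : Module.finrank ℝ E = 2 := finrank_euclideanSpace_fin
  have hvol : ∀ (x : E) (s : ℝ), 0 ≤ s →
      volume (ball x s) = ENNReal.ofReal (s^2) * volume (ball (0:E) 1) := by
    intro x s hs
    rw [MeasureTheory.Measure.addHaar_ball volume x hs, hfr]
  have hvolc : volume (closedBall p R) = ENNReal.ofReal (R^2) * volume (ball (0:E) 1) := by
    rw [MeasureTheory.Measure.addHaar_closedBall volume p hRpos.le, hfr]
  have hle : ∑ w ∈ W, volume (ball (gl ρ w ctr) r) ≤ volume (closedBall p R) := by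
    rw [← MeasureTheory.measure_biUnion_finset hdisj (fun w _ => measurableSet_ball)]
    apply MeasureTheory.measure_mono
    exact Set.iUnion₂_subset hsub_big
  rw [Finset.sum_congr rfl (fun w _ => hvol (gl ρ w ctr) r hrpos.le), Finset.sum_const,
    hvolc, nsmul_eq_mul] at hle
  have hV0 : volume (ball (0:E) 1) ≠ 0 :=
    (Metric.measure_ball_pos volume (0:E) one_pos).ne'
  have hVtop : volume (ball (0:E) 1) ≠ ⊤ := measure_ball_lt_top.ne
  have hle2 : (W.card : ℝ≥0∞) * ENNReal.ofReal (r^2) ≤ ENNReal.ofReal (R^2) := by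
    rw [← mul_assoc] at hle
    exact (ENNReal.mul_le_mul_iff_left hV0 hVtop).1 hle
  have hle3 : ENNReal.ofReal ((W.card : ℝ) * r^2) ≤ ENNReal.ofReal (R^2) := by
    rwa [ENNReal.ofReal_mul (by positivity), ENNReal.ofReal_natCast]
  have := (ENNReal.ofReal_le_ofReal_iff (by positivity)).1 hle3
  exact this

lemma v0_mem_T : v0 ∈ sierpT := by
  have := vtx_mem_T 0
  simpa [vtx] using this

lemma count_lemma {ρ : ℝ} (hρ0 : 0 < ρ) (hρ : ρ ≤ 1/2) (p : E) {Δ : ℝ} (hΔ : 0 < Δ) :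
    ∃ k : ℕ,
      (((Ln k).filter (fun w => (gl ρ w '' sierpT ∩ ball p Δ).Nonempty)).card : ℝ) * (1/3)^k
        ≤ 2304/ρ^2 * Δ ^ (dd ρ) := by
  have hρ1 : ρ < 1 := lt_of_le_of_lt hρ (by norm_num)
  have hC1 : (1:ℝ) ≤ 2304/ρ^2 := by
    rw [le_div_iff₀ (by positivity)]
    nlinarith
  by_cases h1 : 1 ≤ Δ
  · refine ⟨0, ?_⟩
    have hcard : (((Ln 0).filter
        (fun w => (gl ρ w '' sierpT ∩ ball p Δ).Nonempty)).card : ℝ) ≤ 1 := by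
      have := Finset.card_filter_le (Ln 0) (fun w => (gl ρ w '' sierpT ∩ ball p Δ).Nonempty)
      rw [card_Ln 0] at this
      exact_mod_cast this
    have hΔd : (1:ℝ) ≤ Δ ^ (dd ρ) := by
      calc (1:ℝ) = 1 ^ (dd ρ) := (Real.one_rpow _).symm
      _ ≤ Δ ^ (dd ρ) := Real.rpow_le_rpow (by norm_num) h1 (dd_pos hρ0 hρ).le
    calc (((Ln 0).filter (fun w => (gl ρ w '' sierpT ∩ ball p Δ).Nonempty)).card : ℝ) * (1/3)^0
        ≤ 1 := by simpa using hcard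
      _ ≤ 2304/ρ^2 * Δ ^ (dd ρ) := by nlinarith
  · push_neg at h1
    have hex : ∃ n, ρ^n < Δ := exists_pow_lt_of_lt_one hΔ hρ1
    set k₀ := Nat.find hex with hk₀def
    have hk₀ : ρ^k₀ < Δ := Nat.find_spec hex
    have hk₀ne : k₀ ≠ 0 := by
      intro h
      rw [h] at hk₀
      simp at hk₀
      linarith
    obtain ⟨j, hj⟩ : ∃ j, k₀ = j + 1 := ⟨k₀ - 1, (Nat.succ_pred_eq_of_pos (Nat.pos_of_ne_zero hk₀ne)).symm⟩
    have hmin : ¬ (ρ^j < Δ) := Nat.find_min hex (by omega)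
    push_neg at hmin
    have hlow : ρ * Δ ≤ ρ^k₀ := by
      rw [hj, pow_succ]
      nlinarith [mul_le_mul_of_nonneg_left hmin hρ0.le]
    refine ⟨k₀, ?_⟩
    have hpack := packing hρ0 hρ p Δ hΔ k₀
    set N : ℝ := (((Ln k₀).filter
      (fun w => (gl ρ w '' sierpT ∩ ball p Δ).Nonempty)).card : ℝ) with hN
    have hN0 : 0 ≤ N := Nat.cast_nonneg _
    have hNle : N ≤ 2304/ρ^2 := by
      have hrp : (0:ℝ) < ρ^k₀ := pow_pos hρ0 k₀
      have h4 : (Δ + 3*ρ^k₀)^2 ≤ (4*Δ)^2 := by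
        nlinarith [mul_le_mul_of_nonneg_left hk₀.le hΔ.le,
          mul_le_mul_of_nonneg_left hk₀.le hrp.le]
      have h5 : (ρ*Δ/12)^2 ≤ (ρ^k₀/12)^2 := by nlinarith [mul_pos hρ0 hΔ]
      have h6 : N * (ρ*Δ/12)^2 ≤ (4*Δ)^2 := by nlinarith
      rw [le_div_iff₀ (by positivity)]
      nlinarith [mul_pos hρ0 hΔ, sq_nonneg (ρ*Δ)]
    have hpow : ((1:ℝ)/3)^k₀ ≤ Δ ^ (dd ρ) := by
      have : ((ρ^k₀ : ℝ)) ^ (dd ρ) ≤ Δ ^ (dd ρ) :=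
        Real.rpow_le_rpow (by positivity) hk₀.le (dd_pos hρ0 hρ).le
      rwa [rpow_pow_dd hρ0 hρ] at this
    calc N * (1/3)^k₀ ≤ (2304/ρ^2) * Δ ^ (dd ρ) := by
          apply mul_le_mul hNle hpow (by positivity) (by positivity)

lemma moran {ρ : ℝ} (hρ0 : 0 < ρ) (hρ : ρ ≤ 1/2) {F : Finset ℕ} (p : ℕ → E) (Δ : ℕ → ℝ)
    (hΔ : ∀ n ∈ F, 0 < Δ n)
    (hcov : sierpinski ρ ⊆ ⋃ n ∈ F, ball (p n) (Δ n)) :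
    (1:ℝ) ≤ ∑ n ∈ F, 2304/ρ^2 * Δ n ^ (dd ρ) := by
  classical
  have hρ1 : ρ < 1 := lt_of_le_of_lt hρ (by norm_num)
  set Δ' : ℕ → ℝ := fun n => if 0 < Δ n then Δ n else 1 with hΔ'def
  have hΔ'pos : ∀ n, 0 < Δ' n := by
    intro n
    by_cases h : 0 < Δ n <;> simp [hΔ'def, h]
  have hΔ'eq : ∀ n ∈ F, Δ' n = Δ n := fun n hn => if_pos (hΔ n hn)
  choose k hk using fun n => count_lemma hρ0 hρ (p n) (hΔ'pos n)
  set m := F.sup k with hm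
  set W : ℕ → Finset (List (Fin 3)) := fun n =>
    (Ln (k n)).filter (fun w => (gl ρ w '' sierpT ∩ ball (p n) (Δ' n)).Nonempty) with hWdef
  have hcover : Ln m ⊆ F.biUnion (fun n => (W n).biUnion
      (fun q => (Ln m).filter (fun w => w.take (k n) = q))) := by
    intro w hw
    have hwlen : w.length = m := mem_Ln.1 hw
    have hxS : gl ρ w v0 ∈ sierpinski ρ := gl_mem_S hρ0.le hρ1.le w (v0_mem_S ρ)
    have hx := hcov hxS
    simp only [Set.mem_iUnion] at hx
    obtain ⟨n, hn, hxball⟩ := hx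
    have hkm : k n ≤ m := Finset.le_sup hn
    apply Finset.mem_biUnion.2
    refine ⟨n, hn, Finset.mem_biUnion.2 ⟨w.take (k n), ?_, Finset.mem_filter.2 ⟨hw, rfl⟩⟩⟩
    apply Finset.mem_filter.2
    constructor
    · rw [mem_Ln, List.length_take, hwlen]
      exact min_eq_left hkm
    · refine ⟨gl ρ w v0, ?_, ?_⟩
      · have heq : gl ρ w v0 = gl ρ (w.take (k n)) (gl ρ (w.drop (k n)) v0) := by
          rw [← Function.comp_apply (f := gl ρ (w.take (k n))), ← gl_append,
            List.take_append_drop]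
        rw [heq]
        exact ⟨_, gl_mem_T hρ0.le hρ1.le _ v0_mem_T, rfl⟩
      · rw [hΔ'eq n hn]; exact hxball
  have hcard : (3:ℕ)^m ≤ ∑ n ∈ F, ∑ q ∈ W n, 3^(m - k n) := by
    calc (3:ℕ)^m = (Ln m).card := (card_Ln m).symm
      _ ≤ (F.biUnion (fun n => (W n).biUnion
            (fun q => (Ln m).filter (fun w => w.take (k n) = q)))).card :=
          Finset.card_le_card hcover
      _ ≤ ∑ n ∈ F, ((W n).biUnion
            (fun q => (Ln m).filter (fun w => w.take (k n) = q))).card :=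
          Finset.card_biUnion_le
      _ ≤ ∑ n ∈ F, ∑ q ∈ W n, ((Ln m).filter (fun w => w.take (k n) = q)).card :=
          Finset.sum_le_sum (fun n _ => Finset.card_biUnion_le)
      _ ≤ ∑ n ∈ F, ∑ q ∈ W n, 3^(m - k n) :=
          Finset.sum_le_sum (fun n hn => Finset.sum_le_sum
            (fun q _ => card_filter_take q (Finset.le_sup hn)))
  have hreal : (3:ℝ)^m ≤ ∑ n ∈ F, ((W n).card : ℝ) * 3^(m - k n) := by
    have h := (Nat.cast_le (α := ℝ)).2 hcard
    push_cast at h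
    refine h.trans_eq ?_
    apply Finset.sum_congr rfl
    intro n hn
    rw [Finset.sum_const, nsmul_eq_mul]
  have key : (1:ℝ) ≤ ∑ n ∈ F, ((W n).card : ℝ) * (1/3)^(k n) := by
    have h3m : (0:ℝ) < 3^m := by positivity
    rw [← mul_le_mul_iff_left₀ h3m, one_mul, Finset.sum_mul]
    calc (3:ℝ)^m ≤ ∑ n ∈ F, ((W n).card : ℝ) * 3^(m - k n) := hreal
      _ = ∑ n ∈ F, ((W n).card : ℝ) * (1/3)^(k n) * 3^m := by
          apply Finset.sum_congr rfl
          intro n hn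
          have hkm : k n ≤ m := Finset.le_sup hn
          have h3 : (3:ℝ)^(m - k n) * 3^(k n) = 3^m := by
            rw [← pow_add, Nat.sub_add_cancel hkm]
          have h3k : ((3:ℝ)^(k n)) ≠ 0 := by positivity
          rw [one_div, inv_pow, mul_assoc, ← h3,
            mul_comm ((3:ℝ)^(m - k n)) ((3:ℝ)^(k n)), inv_mul_cancel_left₀ h3k]
  calc (1:ℝ) ≤ ∑ n ∈ F, ((W n).card : ℝ) * (1/3)^(k n) := key
    _ ≤ ∑ n ∈ F, 2304/ρ^2 * Δ n ^ (dd ρ) := by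
        apply Finset.sum_le_sum
        intro n hn
        have h1 := hk n
        rw [← hΔ'eq n hn]
        exact h1

/-! ### rpow helpers -/

lemma rpow_pow_comm {a : ℝ} (ha : 0 ≤ a) (n : ℕ) (d : ℝ) :
    ((a^n : ℝ))^d = ((a^d : ℝ))^n := by
  rw [← Real.rpow_natCast a n, ← Real.rpow_mul ha, mul_comm, Real.rpow_mul ha,
    Real.rpow_natCast]

lemma rpow_add_le {x y d : ℝ} (hx : 0 ≤ x) (hy : 0 ≤ y) (hd0 : 0 ≤ d) (hd2 : d ≤ 2) :
    (x + y)^d ≤ 4*(x^d + y^d) := by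
  set M := max x y with hM
  have hM0 : 0 ≤ M := le_trans hx (le_max_left x y)
  have h1 : x + y ≤ 2 * M := by
    rcases le_total x y with h | h
    · have : M = y := max_eq_right h
      rw [this]; linarith
    · have : M = x := max_eq_left h
      rw [this]; linarith
  have h2 : (x+y)^d ≤ (2*M)^d := Real.rpow_le_rpow (by linarith) h1 hd0
  have h3 : ((2:ℝ)*M)^d = 2^d * M^d := Real.mul_rpow (by norm_num) hM0
  have h4 : (2:ℝ)^d ≤ 4 := by
    have : (2:ℝ)^d ≤ (2:ℝ)^(2:ℝ) := Real.rpow_le_rpow_of_exponent_le (by norm_num) hd2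
    have h24 : (2:ℝ)^(2:ℝ) = 4 := by
      rw [show (2:ℝ) = ((2:ℕ):ℝ) by norm_num, Real.rpow_natCast]
      norm_num
    linarith
  have h5 : M^d ≤ x^d + y^d := by
    rcases le_total x y with h | h
    · have : M = y := max_eq_right h
      rw [this]
      have := Real.rpow_nonneg hx d
      linarith
    · have : M = x := max_eq_left h
      rw [this]
      have := Real.rpow_nonneg hy d
      linarith
  have hMd : 0 ≤ M^d := Real.rpow_nonneg hM0 d
  calc (x+y)^d ≤ 2^d * M^d := by rw [← h3]; exact h2
    _ ≤ 4 * M^d := mul_le_mul_of_nonneg_right h4 hMd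
    _ ≤ 4 * (x^d + y^d) := by linarith

/-! ### Lower bound for the Hausdorff measure -/

lemma hausdorff_lower {ρ : ℝ} (hρ0 : 0 < ρ) (hρ : ρ ≤ 1/2) :
    ENNReal.ofReal (ρ^2 / 9216) ≤ μH[dd ρ] (sierpinski ρ) := by
  classical
  have hρ1 : ρ < 1 := lt_of_le_of_lt hρ (by norm_num)
  have hd0 : 0 < dd ρ := dd_pos hρ0 hρ
  have hd2 : dd ρ ≤ 2 := dd_le_two hρ0 hρ
  have key : ∀ t : ℕ → Set E, sierpinski ρ ⊆ ⋃ n, t n →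
      ENNReal.ofReal (ρ^2/9216) ≤
        ∑' n, ⨆ _ : (t n).Nonempty, EMetric.diam (t n) ^ (dd ρ) := by
    intro t hcov
    set g : ℕ → ℝ≥0∞ := fun n => ⨆ _ : (t n).Nonempty, EMetric.diam (t n) ^ (dd ρ) with hg
    by_cases htop : ∃ n, (t n).Nonempty ∧ EMetric.diam (t n) = ∞
    · obtain ⟨n, hne, hdi⟩ := htop
      have hgn : g n = ∞ := by
        rw [hg]
        simp only [hne, iSup_pos, hdi]
        exact ENNReal.top_rpow_of_pos hd0
      refine le_trans ?_ (ENNReal.le_tsum n)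
      show _ ≤ g n
      rw [hgn]
      exact le_top
    · push_neg at htop
      by_cases hAtop : (∑' n, g n) = ∞
      · rw [hAtop]; exact le_top
      set A := ∑' n, g n with hA
      set δ : ℕ → ℝ := fun n => (EMetric.diam (t n)).toReal with hδ
      have hδ0 : ∀ n, 0 ≤ δ n := fun n => ENNReal.toReal_nonneg
      -- the finite sums of δ^d are bounded by A.toReal
      have hsum_le : ∀ F : Finset ℕ, ∑ n ∈ F, δ n ^ (dd ρ) ≤ A.toReal := by
        intro F
        have h1 : ∀ n, ENNReal.ofReal (δ n ^ (dd ρ)) ≤ g n := by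
          intro n
          by_cases hne : (t n).Nonempty
          · have hfin : EMetric.diam (t n) ≠ ∞ := htop n hne
            have hgn : g n = EMetric.diam (t n) ^ (dd ρ) := by
              rw [hg]; simp only [hne, iSup_pos]
            rw [hgn, ← ENNReal.ofReal_toReal hfin,
              ← ENNReal.ofReal_rpow_of_nonneg (hδ0 n) hd0.le]
          · have hdiam : EMetric.diam (t n) = 0 := by
              rw [Set.not_nonempty_iff_eq_empty.1 hne]; exact EMetric.diam_empty
            have : δ n = 0 := by rw [hδ]; simp [hdiam]
            rw [this, Real.zero_rpow hd0.ne']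
            simp
        have h2 : ∑ n ∈ F, ENNReal.ofReal (δ n ^ (dd ρ)) ≤ A := by
          refine le_trans (Finset.sum_le_sum fun n _ => h1 n) ?_
          exact ENNReal.sum_le_tsum F
        rw [← ENNReal.ofReal_sum_of_nonneg (fun n _ => Real.rpow_nonneg (hδ0 n) _)] at h2
        exact (ENNReal.ofReal_le_iff_le_toReal hAtop).1 h2
      -- choose points in the sets
      set p : ℕ → E := fun n => if h : (t n).Nonempty then h.choose else v0 with hp
      have hpmem : ∀ n, (t n).Nonempty → p n ∈ t n := by
        intro n hne
        rw [hp]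
        simp only [hne, dif_pos]
        exact hne.choose_spec
      set q : ℝ := (1/2 : ℝ) ^ (dd ρ) with hq
      have hq0 : 0 < q := Real.rpow_pos_of_pos (by norm_num) _
      have hq1 : q < 1 := Real.rpow_lt_one (by norm_num) (by norm_num) hd0
      set C : ℝ := 2304/ρ^2 with hC
      have hCpos : 0 < C := by rw [hC]; positivity
      -- main estimate for every ε > 0
      have main : ∀ ε : ℝ, 0 < ε →
          1 ≤ 4*C*A.toReal + 4*C*(1-q)⁻¹ * ε^(dd ρ) := by
        intro ε hε
        set Δ : ℕ → ℝ := fun n => δ n + ε * (1/2)^n with hΔdef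
        have hΔpos : ∀ n, 0 < Δ n := by
          intro n
          have := hδ0 n
          have h2 : (0:ℝ) < ε * (1/2)^n := by positivity
          rw [hΔdef]
          dsimp only
          linarith
        have hcov2 : sierpinski ρ ⊆ ⋃ n, ball (p n) (Δ n) := by
          intro x hx
          obtain ⟨n, hn⟩ := Set.mem_iUnion.1 (hcov hx)
          have hne : (t n).Nonempty := ⟨x, hn⟩
          have hbdd : IsBounded (t n) :=
            (Metric.isBounded_iff_ediam_ne_top).2 (htop n hne)
          have hdist : dist x (p n) ≤ δ n :=
            Metric.dist_le_diam_of_mem hbdd hn (hpmem n hne)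
          refine Set.mem_iUnion.2 ⟨n, mem_ball.2 ?_⟩
          have h2 : (0:ℝ) < ε * (1/2)^n := by positivity
          rw [hΔdef]
          dsimp only
          linarith
        obtain ⟨F, hF⟩ := (S_compact ρ).elim_finite_subcover
          (fun n => ball (p n) (Δ n)) (fun n => isOpen_ball) hcov2
        have hmoran := moran hρ0 hρ p Δ (fun n _ => hΔpos n) hF
        have hterm : ∀ n ∈ F, C * Δ n ^ (dd ρ)
            ≤ 4*C*(δ n ^ (dd ρ)) + 4*C*(ε^(dd ρ) * q^n) := by
          intro n hn
          have h4 : Δ n ^ (dd ρ) ≤ 4*(δ n ^ (dd ρ) + (ε * (1/2)^n) ^ (dd ρ)) := by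
            rw [hΔdef]
            exact rpow_add_le (hδ0 n) (by positivity) hd0.le hd2
          have h5 : (ε * (1/2)^n) ^ (dd ρ) = ε^(dd ρ) * q^n := by
            rw [Real.mul_rpow hε.le (by positivity), hq, rpow_pow_comm (by norm_num : (0:ℝ) ≤ 1/2)]
          rw [h5] at h4
          calc C * Δ n ^ (dd ρ)
              ≤ C * (4*(δ n ^ (dd ρ) + ε^(dd ρ) * q^n)) :=
                mul_le_mul_of_nonneg_left h4 hCpos.le
            _ = 4*C*(δ n ^ (dd ρ)) + 4*C*(ε^(dd ρ) * q^n) := by ring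
        have hgeom : ∑ n ∈ F, q^n ≤ (1-q)⁻¹ := by
          have hsummable : Summable (fun n : ℕ => q^n) :=
            summable_geometric_of_lt_one hq0.le hq1
          have := hsummable.sum_le_tsum F (fun n _ => (pow_nonneg hq0.le n))
          rwa [tsum_geometric_of_lt_one hq0.le hq1] at this
        have hεd : 0 ≤ ε^(dd ρ) := Real.rpow_nonneg hε.le _
        calc (1:ℝ) ≤ ∑ n ∈ F, C * Δ n ^ (dd ρ) := hmoran
          _ ≤ ∑ n ∈ F, (4*C*(δ n ^ (dd ρ)) + 4*C*(ε^(dd ρ) * q^n)) :=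
              Finset.sum_le_sum hterm
          _ = 4*C* (∑ n ∈ F, δ n ^ (dd ρ)) + 4*C*ε^(dd ρ) * (∑ n ∈ F, q^n) := by
              rw [Finset.sum_add_distrib, ← Finset.mul_sum, ← Finset.mul_sum,
                ← Finset.mul_sum]
              ring
          _ ≤ 4*C*A.toReal + 4*C*(1-q)⁻¹ * ε^(dd ρ) := by
              have h6 : 4*C* (∑ n ∈ F, δ n ^ (dd ρ)) ≤ 4*C*A.toReal :=
                mul_le_mul_of_nonneg_left (hsum_le F) (by positivity)
              have h7 : 4*C*ε^(dd ρ) * (∑ n ∈ F, q^n) ≤ 4*C*ε^(dd ρ) * (1-q)⁻¹ :=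
                mul_le_mul_of_nonneg_left hgeom (by positivity)
              nlinarith
      -- pass to the limit ε → 0
      have hfinal : 1 ≤ 4*C*A.toReal := by
        apply le_of_forall_pos_le_add
        intro η hη
        set K : ℝ := 4*C*(1-q)⁻¹ with hK
        have hKpos : 0 < K := by
          rw [hK]
          have : (0:ℝ) < (1-q)⁻¹ := by
            apply inv_pos.2; linarith
          positivity
        set ε : ℝ := (η/K) ^ (1/(dd ρ)) with hε
        have hεpos : 0 < ε := Real.rpow_pos_of_pos (div_pos hη hKpos) _
        have hεd : ε ^ (dd ρ) = η/K := by
          rw [hε, ← Real.rpow_mul (div_pos hη hKpos).le, one_div,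
            inv_mul_cancel₀ hd0.ne', Real.rpow_one]
        have := main ε hεpos
        rw [hεd] at this
        have hKη : K * (η/K) = η := by
          field_simp
        calc (1:ℝ) ≤ 4*C*A.toReal + 4*C*(1-q)⁻¹ * (η/K) := this
          _ = 4*C*A.toReal + η := by rw [← hK, hKη]
      -- conclude
      have hAR : ρ^2/9216 ≤ A.toReal := by
        have h8 : (0:ℝ) < ρ^2/9216 := by positivity
        have h9 : (ρ^2/9216) * (4*C) = 1 := by
          rw [hC]; field_simp; ring
        nlinarith
      calc ENNReal.ofReal (ρ^2/9216) ≤ ENNReal.ofReal (A.toReal) :=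
            ENNReal.ofReal_le_ofReal hAR
        _ = A := ENNReal.ofReal_toReal hAtop
  rw [MeasureTheory.Measure.hausdorffMeasure_apply]
  refine le_iSup₂_of_le 1 one_pos ?_
  refine le_iInf fun t => le_iInf fun hcov => le_iInf fun _ => key t hcov

/-! ### Upper bound -/

set_option maxHeartbeats 1000000 in
lemma hausdorff_upper {ρ : ℝ} (hρ0 : 0 < ρ) (hρ : ρ ≤ 1/2) :
    μH[dd ρ] (sierpinski ρ) ≤ ENNReal.ofReal (2 ^ (dd ρ)) := by
  classical
  have hρ1 : ρ < 1 := lt_of_le_of_lt hρ (by norm_num)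
  have hd0 : 0 < dd ρ := dd_pos hρ0 hρ
  have htend : Filter.Tendsto (fun n : ℕ => ENNReal.ofReal (2*ρ^n)) Filter.atTop (nhds 0) := by
    have h1 : Filter.Tendsto (fun n : ℕ => 2*ρ^n) Filter.atTop (nhds 0) := by
      have := (tendsto_pow_atTop_nhds_zero_of_lt_one hρ0.le hρ1).const_mul (2:ℝ)
      simpa using this
    have h2 := ENNReal.tendsto_ofReal (f := Filter.atTop) h1
    simpa using h2
  have hdiam : ∀ (n : ℕ) (w : {w : List (Fin 3) // w ∈ Ln n}),
      EMetric.diam (gl ρ w.1 '' sierpT) ≤ ENNReal.ofReal (2*ρ^n) := by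
    rintro n ⟨w, hw⟩
    apply EMetric.diam_le
    rintro x ⟨s, hs, rfl⟩ y ⟨u, hu, rfl⟩
    rw [edist_dist, dist_gl hρ0.le, mem_Ln.1 hw]
    apply ENNReal.ofReal_le_ofReal
    have := dist_le_two_T hs hu
    have hρn : (0:ℝ) ≤ ρ^n := by positivity
    nlinarith
  have hcov : ∀ n : ℕ, sierpinski ρ ⊆
      ⋃ w : {w : List (Fin 3) // w ∈ Ln n}, gl ρ w.1 '' sierpT := by
    intro n x hx
    have h1 := S_sub_iter ρ n hx
    rw [iter_eq_union ρ n] at h1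
    simp only [Set.mem_iUnion] at h1 ⊢
    obtain ⟨w, hw, hx'⟩ := h1
    exact ⟨⟨w, hw⟩, hx'⟩
  have hmain := MeasureTheory.Measure.hausdorffMeasure_le_liminf_sum (dd ρ) (sierpinski ρ)
    (fun n => ENNReal.ofReal (2*ρ^n)) htend
    (fun n (w : {w : List (Fin 3) // w ∈ Ln n}) => gl ρ w.1 '' sierpT)
    (Filter.Eventually.of_forall hdiam) (Filter.Eventually.of_forall hcov)
  apply hmain.trans
  have hb : ∀ n : ℕ, (∑ w : {w : List (Fin 3) // w ∈ Ln n},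
      EMetric.diam (gl ρ w.1 '' sierpT) ^ (dd ρ)) ≤ ENNReal.ofReal (2^(dd ρ)) := by
    intro n
    have h1 : ∀ w : {w : List (Fin 3) // w ∈ Ln n},
        EMetric.diam (gl ρ w.1 '' sierpT) ^ (dd ρ)
          ≤ (ENNReal.ofReal (2*ρ^n)) ^ (dd ρ) := by
      intro w
      exact ENNReal.rpow_le_rpow (hdiam n w) hd0.le
    calc (∑ w : {w : List (Fin 3) // w ∈ Ln n},
          EMetric.diam (gl ρ w.1 '' sierpT) ^ (dd ρ))
        ≤ ∑ _w : {w : List (Fin 3) // w ∈ Ln n}, (ENNReal.ofReal (2*ρ^n)) ^ (dd ρ) :=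
          Finset.sum_le_sum (fun w _ => h1 w)
      _ = (Fintype.card {w : List (Fin 3) // w ∈ Ln n} : ℝ≥0∞)
            * (ENNReal.ofReal (2*ρ^n)) ^ (dd ρ) := by
          rw [Finset.sum_const, nsmul_eq_mul, Finset.card_univ]
      _ = ENNReal.ofReal (2^(dd ρ)) := by
          rw [Fintype.card_coe, card_Ln]
          rw [ENNReal.ofReal_rpow_of_nonneg (by positivity) hd0.le]
          have h2 : ((3^n : ℕ) : ℝ≥0∞) = ENNReal.ofReal ((3:ℝ)^n) := by
            rw [← ENNReal.ofReal_natCast]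
            norm_num
          rw [h2, ← ENNReal.ofReal_mul (by positivity)]
          congr 1
          rw [Real.mul_rpow (by norm_num) (by positivity), rpow_pow_dd hρ0 hρ]
          rw [show (3:ℝ)^n * ((2:ℝ)^(dd ρ) * ((1:ℝ)/3)^n)
              = ((3:ℝ)*(1/3))^n * 2^(dd ρ) by rw [mul_pow]; ring]
          norm_num
  calc Filter.liminf (fun n : ℕ => ∑ w : {w : List (Fin 3) // w ∈ Ln n},
        EMetric.diam (gl ρ w.1 '' sierpT) ^ (dd ρ)) Filter.atTop
      ≤ Filter.liminf (fun _n : ℕ => ENNReal.ofReal (2^(dd ρ))) Filter.atTop :=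
        Filter.liminf_le_liminf (Filter.Eventually.of_forall hb)
    _ = ENNReal.ofReal (2^(dd ρ)) := Filter.liminf_const _

/-! ### Conclusion -/

lemma final {ρ : ℝ} (hρ0 : 0 < ρ) (hρ : ρ ≤ 1/2) :
    dimH (sierpinski ρ) = ENNReal.ofReal (Real.log 3 / Real.log (1/ρ)) := by
  have hd0 : 0 < dd ρ := dd_pos hρ0 hρ
  set dnn : ℝ≥0 := ⟨dd ρ, hd0.le⟩ with hdnn
  have hne0 : μH[(dnn : ℝ)] (sierpinski ρ) ≠ 0 := by
    show μH[dd ρ] (sierpinski ρ) ≠ 0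
    have hl := hausdorff_lower hρ0 hρ
    have hpos : (0:ℝ≥0∞) < ENNReal.ofReal (ρ^2/9216) := by
      rw [ENNReal.ofReal_pos]; positivity
    exact (lt_of_lt_of_le hpos hl).ne'
  have hnetop : μH[(dnn : ℝ)] (sierpinski ρ) ≠ ⊤ := by
    show μH[dd ρ] (sierpinski ρ) ≠ ⊤
    exact (lt_of_le_of_lt (hausdorff_upper hρ0 hρ) ENNReal.ofReal_lt_top).ne
  have hdim := dimH_of_hausdorffMeasure_ne_zero_ne_top hne0 hnetop
  rw [hdim]
  rw [show Real.log 3 / Real.log (1/ρ) = dd ρ from rfl]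
  rw [ENNReal.ofReal_eq_coe_nnreal hd0.le]
  rfl

end Sierp

/-- The Hausdorff dimension of `S` equals `log 3 / log (1/ρ)`. -/
theorem sierpinski_dimH (ρ : ℝ) (hρ0 : 0 < ρ) (hρ : ρ ≤ 1 / 2) :
    dimH (sierpinski ρ) = ENNReal.ofReal (Real.log 3 / Real.log (1 / ρ)) :=
  Sierp.final hρ0 hρ
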